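/- Convolution theorem for the natural transform: for continuous functions φ, ψ of exponential order and all sufficiently large s > 0 and τ > 0, τ · N[φ](s,τ) · N[ψ](s,τ) = N[φ ∗ ψ](s,τ), where (φ ∗ ψ)(t) = ∫₀^t φ(t−x) ψ(x) dx. -/

import Mathlib

open MeasureTheory Set intervalIntegral

/-- convolution theorem for the natural transform:
τ N[φ](s,τ) N[ψ](s,τ) = N[φ ∗ ψ](s,τ). -/
theorem natural_transform_convolution
    (φ ψ : ℝ → ℝ) (hφ : Continuous φ) (hψ : Continuous ψ)
    (K c : ℝ) (hK : 0 < K)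
    (hexpφ : ∀ t ≥ (0:ℝ), |φ t| ≤ K * Real.exp (c * t))
    (hexpψ : ∀ t ≥ (0:ℝ), |ψ t| ≤ K * Real.exp (c * t))
    (s τ : ℝ) (hs : 0 < s) (hτ : 0 < τ) (hsc : c < s / τ) :
    τ * (∫ t in Ioi (0:ℝ), Real.exp (-(s * t)) * φ (τ * t)) *
        (∫ t in Ioi (0:ℝ), Real.exp (-(s * t)) * ψ (τ * t))
      = ∫ t in Ioi (0:ℝ), Real.exp (-(s * t)) *
          (∫ x in (0:ℝ)..(τ * t), φ (τ * t - x) * ψ x) := by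
  have hcτ : c * τ < s := (lt_div_iff₀ hτ).mp hsc
  -- integrability of the integrands
  have key : ∀ θ : ℝ → ℝ, Continuous θ → (∀ t ≥ (0:ℝ), |θ t| ≤ K * Real.exp (c * t)) →
      IntegrableOn (fun t => Real.exp (-(s * t)) * θ (τ * t)) (Ioi (0:ℝ)) := by
    intro θ hθc hθb
    have h1 : IntegrableOn (fun t : ℝ => K * Real.exp (-(s - c * τ) * t)) (Ioi (0:ℝ)) :=
      (exp_neg_integrableOn_Ioi 0 (by linarith)).const_mul K
    refine h1.mono' ((Continuous.mul (by continuity) (hθc.comp (by continuity))).aestronglyMeasurable) ?_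
    filter_upwards [ae_restrict_mem measurableSet_Ioi] with t ht
    have ht0 : (0:ℝ) ≤ t := le_of_lt ht
    have hb := hθb (τ * t) (by positivity)
    calc ‖Real.exp (-(s * t)) * θ (τ * t)‖
        = Real.exp (-(s * t)) * |θ (τ * t)| := by
          rw [norm_mul, Real.norm_eq_abs, Real.norm_eq_abs, abs_of_pos (Real.exp_pos _)]
      _ ≤ Real.exp (-(s * t)) * (K * Real.exp (c * (τ * t))) :=
          mul_le_mul_of_nonneg_left hb (Real.exp_pos _).le
      _ = K * Real.exp (-(s - c * τ) * t) := by
          rw [mul_left_comm, ← Real.exp_add]; ring_nf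
  set f : ℝ → ℝ := fun t => Real.exp (-(s * t)) * φ (τ * t) with hfdef
  set g : ℝ → ℝ := fun t => Real.exp (-(s * t)) * ψ (τ * t) with hgdef
  have hfi : IntegrableOn f (Ioi (0:ℝ)) := key φ hφ hexpφ
  have hgi : IntegrableOn g (Ioi (0:ℝ)) := key ψ hψ hexpψ
  have conv := integral_posConvolution (μ := volume) (ν := volume) hgi hfi
    (ContinuousLinearMap.mul ℝ ℝ)
  simp_rw [ContinuousLinearMap.mul_apply'] at conv
  -- pointwise identity for the inner integral
  have hpt : ∀ x ∈ Ioi (0:ℝ),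
      Real.exp (-(s * x)) * (∫ y in (0:ℝ)..(τ * x), φ (τ * x - y) * ψ y)
        = τ * ∫ t in (0:ℝ)..x, g t * f (x - t) := by
    intro x _
    have hsub : (∫ y in (0:ℝ)..(τ * x), φ (τ * x - y) * ψ y)
        = τ * ∫ t in (0:ℝ)..x, φ (τ * x - τ * t) * ψ (τ * t) := by
      rw [intervalIntegral.integral_comp_mul_left (fun y => φ (τ * x - y) * ψ y) hτ.ne',
        mul_zero, smul_eq_mul, ← mul_assoc, mul_inv_cancel₀ hτ.ne', one_mul]
    rw [hsub, ← mul_assoc, mul_comm (Real.exp (-(s * x))) τ, mul_assoc,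
      ← intervalIntegral.integral_const_mul]
    congr 1
    apply intervalIntegral.integral_congr
    intro t _
    simp only [hfdef, hgdef]
    have : Real.exp (-(s * x)) = Real.exp (-(s * t)) * Real.exp (-(s * (x - t))) := by
      rw [← Real.exp_add]; ring_nf
    rw [this, mul_sub]
    ring
  calc τ * (∫ t in Ioi (0:ℝ), f t) * (∫ t in Ioi (0:ℝ), g t)
      = τ * ((∫ t in Ioi (0:ℝ), g t) * (∫ t in Ioi (0:ℝ), f t)) := by ring
    _ = τ * ∫ x in Ioi (0:ℝ), ∫ t in (0:ℝ)..x, g t * f (x - t) := by rw [conv]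
    _ = ∫ x in Ioi (0:ℝ), τ * ∫ t in (0:ℝ)..x, g t * f (x - t) := by
        rw [MeasureTheory.integral_const_mul]
    _ = ∫ t in Ioi (0:ℝ), Real.exp (-(s * t)) *
          (∫ x in (0:ℝ)..(τ * t), φ (τ * t - x) * ψ x) := by
        exact (setIntegral_congr_fun measurableSet_Ioi hpt).symm
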